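/- Let B ⊆ ℕ be a Δ⁰₂ set with 0 ∉ B. Then there exists a c.e. (Σ⁰₁) preorder S on ℕ, a partition of ℕ into {c, d} ∪ {a_i : i ∈ ℕ} ∪ {b_j : j ∈ ℕ}, and a function v : ℕ → ℕ such that (writing x <_S y for x S y ∧ ¬(y S x)): S is reflexive; the elements a_i are pairwise S-incomparable; c <_S a_i for every i; every a_i is S-incomparable with d; c and d are S-incomparable; b_{j+1} <_S b_j <_S d for every j; every b_j is S-incomparable with c; for all i,j one has b_j <_S a_i if and only if j ≥ v(i), and never a_i S b_j; for every nonzero x ∈ ℕ, if x ∈ B then there is exactly one i with v(i) = x, and if x ∉ B then there is no i with v(i) = x; and the set {i : v(i) = 0} is infinite. -/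

import Mathlib

/-- A binary relation on ℕ is c.e. (Σ⁰₁) if its set of pairs is computably enumerable. -/
def RelCE (R : ℕ → ℕ → Prop) : Prop := REPred fun p : ℕ × ℕ => R p.1 p.2

/-- A set `B ⊆ ℕ` is Δ⁰₂: it has a total computable {0,1}-valued approximation
converging in the limit to its characteristic function. -/
def Delta02Set (B : Set ℕ) : Prop :=
  ∃ g : ℕ → ℕ → Bool, Computable₂ g ∧ ∀ x, ∃ N, ∀ s, N ≤ s → (g x s = true ↔ x ∈ B)

/-- The structural description of the preorder `S_B` from the paper, with distinguished
elements `c, d`, families `a i`, `b j` partitioning ℕ, and the parameter function `v`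
(writing "`x` strictly below `y`" for `S x y ∧ ¬ S y x`): the `a i` are pairwise
incomparable, `c` is strictly below every `a i`, each `a i` is incomparable with `d`,
`c` and `d` are incomparable, `b (j+1)` is strictly below `b j`, which is strictly below
`d`, each `b j` is incomparable with `c`, `b j` is strictly below `a i` iff `j ≥ v i`
(and never `a i S b j`), and infinitely many `i` satisfy `v i = 0`. -/
def SBCore (S : ℕ → ℕ → Prop) (c d : ℕ) (a b : ℕ → ℕ) (v : ℕ → ℕ) : Prop :=
  Function.Injective a ∧ Function.Injective b ∧
  c ≠ d ∧ (∀ i, a i ≠ c) ∧ (∀ i, a i ≠ d) ∧ (∀ j, b j ≠ c) ∧ (∀ j, b j ≠ d) ∧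
  (∀ i j, a i ≠ b j) ∧
  (∀ n : ℕ, n = c ∨ n = d ∨ (∃ i, n = a i) ∨ (∃ j, n = b j)) ∧
  (∀ x, S x x) ∧
  (∀ i j, i ≠ j → ¬ S (a i) (a j)) ∧
  (∀ i, S c (a i) ∧ ¬ S (a i) c) ∧
  (∀ i, ¬ S (a i) d ∧ ¬ S d (a i)) ∧
  (¬ S c d ∧ ¬ S d c) ∧
  (∀ j, S (b (j + 1)) (b j) ∧ ¬ S (b j) (b (j + 1))) ∧
  (∀ j, S (b j) d ∧ ¬ S d (b j)) ∧
  (∀ j, ¬ S (b j) c ∧ ¬ S c (b j)) ∧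
  (∀ i j, (S (b j) (a i) ∧ ¬ S (a i) (b j)) ↔ v i ≤ j) ∧
  (∀ i j, ¬ S (a i) (b j)) ∧
  Set.Infinite {i : ℕ | v i = 0}

namespace SBaux

/-- first component of the pair coded by the `a`-index of `n` -/
def xOf (n : ℕ) : ℕ := (Nat.unpair (n / 2 - 1)).1
def nOf (n : ℕ) : ℕ := (Nat.unpair (n / 2 - 1)).2

/-- the c.e. preorder -/
def Srel (g : ℕ → ℕ → Bool) (m n : ℕ) : Prop :=
  (m = n ∨
   (m = 0 ∧ n % 2 = 0 ∧ 2 ≤ n) ∨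
   (m % 2 = 1 ∧ 3 ≤ m ∧ n % 2 = 1 ∧ 3 ≤ n ∧ n ≤ m) ∨
   (m % 2 = 1 ∧ 3 ≤ m ∧ n = 1)) ∨
  ((m % 2 = 1 ∧ 3 ≤ m ∧ n % 2 = 0 ∧ 2 ≤ n) ∧
    (xOf n ≤ m / 2 - 1 ∨ (0 < nOf n ∧ g (xOf n) (nOf n - 1) = true) ∨
      ∃ s, nOf n ≤ s ∧ g (xOf n) s = false))

/-- enumeration function for `Srel` -/
def fB (g : ℕ → ℕ → Bool) (p : ℕ × ℕ) (s : ℕ) : Bool :=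
  decide (p.1 = p.2 ∨
    (p.1 = 0 ∧ p.2 % 2 = 0 ∧ 2 ≤ p.2) ∨
    (p.1 % 2 = 1 ∧ 3 ≤ p.1 ∧ p.2 % 2 = 1 ∧ 3 ≤ p.2 ∧ p.2 ≤ p.1) ∨
    (p.1 % 2 = 1 ∧ 3 ≤ p.1 ∧ p.2 = 1)) ||
  (decide (p.1 % 2 = 1 ∧ 3 ≤ p.1 ∧ p.2 % 2 = 0 ∧ 2 ≤ p.2) &&
    (decide (xOf p.2 ≤ p.1 / 2 - 1) ||
     (decide (0 < nOf p.2) && g (xOf p.2) (nOf p.2 - 1)) ||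
     (decide (nOf p.2 ≤ s) && !(g (xOf p.2) s))))

lemma srel_iff_exists (g : ℕ → ℕ → Bool) (p : ℕ × ℕ) :
    Srel g p.1 p.2 ↔ ∃ s, fB g p s = true := by
  simp only [Srel, fB, Bool.or_eq_true, Bool.and_eq_true, decide_eq_true_eq,
    Bool.not_eq_true']
  constructor
  · rintro (h | ⟨h1, h2 | h2 | ⟨s, hs1, hs2⟩⟩)
    · exact ⟨0, Or.inl h⟩
    · exact ⟨0, Or.inr ⟨h1, Or.inl (Or.inl h2)⟩⟩
    · exact ⟨0, Or.inr ⟨h1, Or.inl (Or.inr h2)⟩⟩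
    · exact ⟨s, Or.inr ⟨h1, Or.inr ⟨hs1, hs2⟩⟩⟩
  · rintro ⟨s, h | ⟨h1, (h2 | h2) | ⟨hs1, hs2⟩⟩⟩
    · exact Or.inl h
    · exact Or.inr ⟨h1, Or.inl h2⟩
    · exact Or.inr ⟨h1, Or.inr (Or.inl h2)⟩
    · exact Or.inr ⟨h1, Or.inr (Or.inr ⟨s, hs1, hs2⟩)⟩

lemma rePred_of_exists {f : ℕ × ℕ → ℕ → Bool} (hf : Computable₂ f) :
    REPred fun a : ℕ × ℕ => ∃ s, f a s = true := by
  have h : Partrec fun a : ℕ × ℕ => Nat.rfind fun n => (f a n : Part Bool) :=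
    Partrec.rfind hf.partrec₂
  refine h.dom_re.of_eq fun a => ?_
  refine Nat.rfind_dom.trans ?_
  constructor
  · rintro ⟨n, h1, _⟩
    exact ⟨n, by simpa using h1⟩
  · rintro ⟨s, hs⟩
    exact ⟨s, by simpa using hs, fun _ => trivial⟩

lemma fB_computable {g : ℕ → ℕ → Bool} (hg : Computable₂ g) : Computable₂ (fB g) := by
  have hm : Primrec fun q : (ℕ × ℕ) × ℕ => q.1.1 := Primrec.fst.comp Primrec.fst
  have hn : Primrec fun q : (ℕ × ℕ) × ℕ => q.1.2 := Primrec.snd.comp Primrec.fst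
  have hs : Primrec fun q : (ℕ × ℕ) × ℕ => q.2 := Primrec.snd
  have hidx : Primrec fun q : (ℕ × ℕ) × ℕ => q.1.2 / 2 - 1 :=
    Primrec.nat_sub.comp (Primrec.nat_div.comp hn (Primrec.const 2)) (Primrec.const 1)
  have hx : Primrec fun q : (ℕ × ℕ) × ℕ => xOf q.1.2 :=
    Primrec.fst.comp (Primrec.unpair.comp hidx)
  have hnn : Primrec fun q : (ℕ × ℕ) × ℕ => nOf q.1.2 :=
    Primrec.snd.comp (Primrec.unpair.comp hidx)
  have hmod : Primrec fun q : (ℕ × ℕ) × ℕ => q.1.1 % 2 :=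
    Primrec.nat_mod.comp hm (Primrec.const 2)
  have hmod2 : Primrec fun q : (ℕ × ℕ) × ℕ => q.1.2 % 2 :=
    Primrec.nat_mod.comp hn (Primrec.const 2)
  have hd1 : PrimrecPred fun q : (ℕ × ℕ) × ℕ => q.1.1 = q.1.2 :=
    Primrec.eq.comp hm hn
  have hd2 : PrimrecPred fun q : (ℕ × ℕ) × ℕ =>
      q.1.1 = 0 ∧ q.1.2 % 2 = 0 ∧ 2 ≤ q.1.2 :=
    (Primrec.eq.comp hm (Primrec.const 0)).and
      ((Primrec.eq.comp hmod2 (Primrec.const 0)).and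
        (Primrec.nat_le.comp (Primrec.const 2) hn))
  have hisBm : PrimrecPred fun q : (ℕ × ℕ) × ℕ => q.1.1 % 2 = 1 ∧ 3 ≤ q.1.1 :=
    (Primrec.eq.comp hmod (Primrec.const 1)).and (Primrec.nat_le.comp (Primrec.const 3) hm)
  have hd3 : PrimrecPred fun q : (ℕ × ℕ) × ℕ =>
      q.1.1 % 2 = 1 ∧ 3 ≤ q.1.1 ∧ q.1.2 % 2 = 1 ∧ 3 ≤ q.1.2 ∧ q.1.2 ≤ q.1.1 :=
    (Primrec.eq.comp hmod (Primrec.const 1)).and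
      ((Primrec.nat_le.comp (Primrec.const 3) hm).and
        ((Primrec.eq.comp hmod2 (Primrec.const 1)).and
          ((Primrec.nat_le.comp (Primrec.const 3) hn).and
            (Primrec.nat_le.comp hn hm))))
  have hd4 : PrimrecPred fun q : (ℕ × ℕ) × ℕ =>
      q.1.1 % 2 = 1 ∧ 3 ≤ q.1.1 ∧ q.1.2 = 1 :=
    (Primrec.eq.comp hmod (Primrec.const 1)).and
      ((Primrec.nat_le.comp (Primrec.const 3) hm).and
        (Primrec.eq.comp hn (Primrec.const 1)))
  have hd5 : PrimrecPred fun q : (ℕ × ℕ) × ℕ =>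
      q.1.1 % 2 = 1 ∧ 3 ≤ q.1.1 ∧ q.1.2 % 2 = 0 ∧ 2 ≤ q.1.2 :=
    (Primrec.eq.comp hmod (Primrec.const 1)).and
      ((Primrec.nat_le.comp (Primrec.const 3) hm).and
        ((Primrec.eq.comp hmod2 (Primrec.const 0)).and
          (Primrec.nat_le.comp (Primrec.const 2) hn)))
  have hbase : PrimrecPred fun q : (ℕ × ℕ) × ℕ =>
      q.1.1 = q.1.2 ∨
      (q.1.1 = 0 ∧ q.1.2 % 2 = 0 ∧ 2 ≤ q.1.2) ∨
      (q.1.1 % 2 = 1 ∧ 3 ≤ q.1.1 ∧ q.1.2 % 2 = 1 ∧ 3 ≤ q.1.2 ∧ q.1.2 ≤ q.1.1) ∨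
      (q.1.1 % 2 = 1 ∧ 3 ≤ q.1.1 ∧ q.1.2 = 1) :=
    hd1.or (hd2.or (hd3.or hd4))
  have hE : PrimrecPred fun q : (ℕ × ℕ) × ℕ => xOf q.1.2 ≤ q.1.1 / 2 - 1 :=
    Primrec.nat_le.comp hx
      (Primrec.nat_sub.comp (Primrec.nat_div.comp hm (Primrec.const 2)) (Primrec.const 1))
  have hF0 : PrimrecPred fun q : (ℕ × ℕ) × ℕ => 0 < nOf q.1.2 :=
    Primrec.nat_le.comp (Primrec.const 1) hnn
  have hG0 : PrimrecPred fun q : (ℕ × ℕ) × ℕ => nOf q.1.2 ≤ q.2 :=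
    Primrec.nat_le.comp hnn hs
  have hor : Computable₂ (· || · : Bool → Bool → Bool) := (Primrec.dom_bool₂ _).to_comp
  have hand : Computable₂ (· && · : Bool → Bool → Bool) := (Primrec.dom_bool₂ _).to_comp
  have hnot : Computable (! · : Bool → Bool) := (Primrec.dom_bool _).to_comp
  have hg1 : Computable fun q : (ℕ × ℕ) × ℕ => g (xOf q.1.2) (nOf q.1.2 - 1) :=
    hg.comp hx.to_comp (Primrec.nat_sub.comp hnn (Primrec.const 1)).to_comp
  have hg2 : Computable fun q : (ℕ × ℕ) × ℕ => g (xOf q.1.2) q.2 :=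
    hg.comp hx.to_comp hs.to_comp
  exact hor.comp hbase.decide.to_comp
    (hand.comp hd5.decide.to_comp
      (hor.comp (hor.comp hE.decide.to_comp (hand.comp hF0.decide.to_comp hg1))
        (hand.comp hG0.decide.to_comp (hnot.comp hg2))))

/-- the true-settling-point predicate -/
def Qp (g : ℕ → ℕ → Bool) (x n : ℕ) : Prop :=
  (∀ s, n ≤ s → g x s = true) ∧ (n = 0 ∨ g x (n - 1) = false)

open Classical in
noncomputable def vB (g : ℕ → ℕ → Bool) (i : ℕ) : ℕ :=
  if Qp g i.unpair.1 i.unpair.2 then i.unpair.1 else 0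

lemma not_Qp_iff (g : ℕ → ℕ → Bool) (x n : ℕ) :
    ((0 < n ∧ g x (n - 1) = true) ∨ ∃ s, n ≤ s ∧ g x s = false) ↔ ¬ Qp g x n := by
  constructor
  · rintro (⟨h1, h2⟩ | ⟨s, hs1, hs2⟩) ⟨hA, hC⟩
    · rcases hC with h | h
      · omega
      · rw [h2] at h; cases h
    · rw [hA s hs1] at hs2; cases hs2
  · intro h
    by_cases hA : ∀ s, n ≤ s → g x s = true
    · have hC : ¬(n = 0 ∨ g x (n - 1) = false) := fun hC => h ⟨hA, hC⟩
      push_neg at hC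
      refine Or.inl ⟨Nat.pos_of_ne_zero hC.1, ?_⟩
      simpa using hC.2
    · push_neg at hA
      obtain ⟨s, hs1, hs2⟩ := hA
      exact Or.inr ⟨s, hs1, by simpa using hs2⟩

lemma Qp_unique {g : ℕ → ℕ → Bool} {x n n' : ℕ} (h : Qp g x n) (h' : Qp g x n') :
    n = n' := by
  by_contra hne
  rcases Nat.lt_or_ge n n' with hlt | hge
  · have h1 : g x (n' - 1) = true := h.1 _ (by omega)
    rcases h'.2 with h2 | h2
    · omega
    · rw [h1] at h2; cases h2
  · have hlt : n' < n := by omega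
    have h1 : g x (n - 1) = true := h'.1 _ (by omega)
    rcases h.2 with h2 | h2
    · omega
    · rw [h1] at h2; cases h2

end SBaux


open SBaux

/-- For every Δ⁰₂ set `B` with `0 ∉ B` there is a c.e. preorder `S` on ℕ realizing the
structural description `S_B`, where additionally every nonzero `x ∈ B` equals `v i` for
exactly one `i`, and no nonzero `x ∉ B` is a value of `v`. -/
theorem exists_ce_preorder_SB (B : Set ℕ) (hB : Delta02Set B) (h0 : 0 ∉ B) :
    ∃ (S : ℕ → ℕ → Prop) (c d : ℕ) (a b : ℕ → ℕ) (v : ℕ → ℕ),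
      Reflexive S ∧ Transitive S ∧ RelCE S ∧ SBCore S c d a b v ∧
      (∀ x : ℕ, x ≠ 0 →
        ((x ∈ B → ∃! i, v i = x) ∧ (x ∉ B → ∀ i, v i ≠ x))) := by
  classical
  obtain ⟨g, hgc, hg⟩ := hB
  refine ⟨Srel g, 0, 1, fun i => 2 * i + 2, fun j => 2 * j + 3, vB g, ?_, ?_, ?_, ?_, ?_⟩
  · -- Reflexive
    intro x; exact Or.inl (Or.inl rfl)
  · -- Transitive
    rintro m n k hmn hnk
    rcases hmn with (rfl | h2 | h3 | h4) | h5
    · exact hnk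
    · -- m = 0, n is an a
      obtain ⟨hm0, hn1, hn2⟩ := h2
      rcases hnk with (rfl | q2 | q3 | q4) | q5
      · exact Or.inl (Or.inr (Or.inl ⟨hm0, hn1, hn2⟩))
      · omega
      · omega
      · omega
      · omega
    · -- m, n both b's
      obtain ⟨p1, p2, p3, p4, p5⟩ := h3
      rcases hnk with (rfl | q2 | q3 | q4) | q5
      · exact Or.inl (Or.inr (Or.inr (Or.inl ⟨p1, p2, p3, p4, p5⟩)))
      · omega
      · exact Or.inl (Or.inr (Or.inr (Or.inl ⟨p1, p2, q3.2.2.1, q3.2.2.2.1, by omega⟩)))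
      · exact Or.inl (Or.inr (Or.inr (Or.inr ⟨p1, p2, q4.2.2⟩)))
      · refine Or.inr ⟨⟨p1, p2, q5.1.2.2.1, q5.1.2.2.2⟩, ?_⟩
        refine q5.2.imp (fun h => le_trans h (by omega)) id
    · -- n = 1
      obtain ⟨p1, p2, p3⟩ := h4
      subst p3
      rcases hnk with (rfl | q2 | q3 | q4) | q5
      · exact Or.inl (Or.inr (Or.inr (Or.inr ⟨p1, p2, rfl⟩)))
      · omega
      · omega
      · omega
      · omega
    · -- n is an a
      obtain ⟨⟨p1, p2, p3, p4⟩, pc⟩ := h5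
      rcases hnk with (rfl | q2 | q3 | q4) | q5
      · exact Or.inr ⟨⟨p1, p2, p3, p4⟩, pc⟩
      · omega
      · omega
      · omega
      · omega
  · -- RelCE
    exact (rePred_of_exists (fB_computable hgc)).of_eq fun p => (srel_iff_exists g p).symm
  · -- SBCore
    rw [SBCore]
    beta_reduce
    have hfromA : ∀ i n, Srel g (2 * i + 2) n → n = 2 * i + 2 := by
      rintro i n ((h | h | h | h) | h)
      · omega
      · omega
      · omega
      · omega
      · exact absurd h.1.1 (by omega)
    have hfromD : ∀ n, Srel g 1 n → n = 1 := by
      rintro n ((h | h | h | h) | h)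
      · omega
      · omega
      · omega
      · omega
      · exact absurd h.1.2.1 (by omega)
    have hidxA : ∀ i : ℕ, (2 * i + 2) / 2 - 1 = i := by intro i; omega
    have hidxB : ∀ j : ℕ, (2 * j + 3) / 2 - 1 = j := by intro j; omega
    have hSba : ∀ i j : ℕ, Srel g (2 * j + 3) (2 * i + 2) ↔ vB g i ≤ j := by
      intro i j
      have hx : xOf (2 * i + 2) = i.unpair.1 := by rw [xOf, hidxA]
      have hn : nOf (2 * i + 2) = i.unpair.2 := by rw [nOf, hidxA]
      constructor
      · rintro ((h | h | h | h) | ⟨_, hc⟩)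
        · omega
        · omega
        · omega
        · omega
        · rw [hx, hn, hidxB] at hc
          rcases hc with h | h
          · unfold vB
            split
            · exact le_trans (le_of_eq rfl) h
            · omega
          · have hnq : ¬ Qp g i.unpair.1 i.unpair.2 := (not_Qp_iff g _ _).1 h
            unfold vB
            rw [if_neg hnq]; omega
      · intro hv
        refine Or.inr ⟨⟨by omega, by omega, by omega, by omega⟩, ?_⟩
        rw [hx, hn, hidxB]
        by_cases hq : Qp g i.unpair.1 i.unpair.2
        · unfold vB at hv
          rw [if_pos hq] at hv
          exact Or.inl hv
        · exact Or.inr ((not_Qp_iff g _ _).2 hq)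
    refine ⟨?_, ?_, ?_, ?_, ?_, ?_, ?_, ?_, ?_, ?_, ?_, ?_, ?_, ?_, ?_, ?_, ?_, ?_, ?_, ?_⟩
    · intro i j h
      have h' : 2 * i + 2 = 2 * j + 2 := h
      omega
    · intro i j h
      have h' : 2 * i + 3 = 2 * j + 3 := h
      omega
    · omega
    · intro i; omega
    · intro i; omega
    · intro j; omega
    · intro j; omega
    · intro i j; omega
    · intro n
      by_cases hn0 : n = 0
      · exact Or.inl hn0
      by_cases hn1 : n = 1
      · exact Or.inr (Or.inl hn1)
      rcases Nat.mod_two_eq_zero_or_one n with h2 | h2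
      · exact Or.inr (Or.inr (Or.inl ⟨n / 2 - 1, by omega⟩))
      · exact Or.inr (Or.inr (Or.inr ⟨n / 2 - 1, by omega⟩))
    · intro x; exact Or.inl (Or.inl rfl)
    · intro i j hij h
      have := hfromA i _ h
      omega
    · intro i
      refine ⟨Or.inl (Or.inr (Or.inl ⟨rfl, by omega, by omega⟩)), fun h => ?_⟩
      have := hfromA i _ h; omega
    · intro i
      refine ⟨fun h => ?_, fun h => ?_⟩
      · have := hfromA i _ h; omega
      · have := hfromD _ h; omega
    · constructor
      · rintro ((h | h | h | h) | h)
        · omega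
        · omega
        · omega
        · omega
        · exact absurd h.1.1 (by omega)
      · intro h; have := hfromD _ h; omega
    · intro j
      refine ⟨Or.inl (Or.inr (Or.inr (Or.inl ⟨by omega, by omega, by omega, by omega, by omega⟩))), ?_⟩
      rintro ((h | h | h | h) | h)
      · omega
      · omega
      · omega
      · omega
      · exact absurd h.1.2.2.1 (by omega)
    · intro j
      refine ⟨Or.inl (Or.inr (Or.inr (Or.inr ⟨by omega, by omega, rfl⟩))), fun h => ?_⟩
      have := hfromD _ h; omega
    · intro j
      constructor
      · rintro ((h | h | h | h) | h)
        · omega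
        · omega
        · omega
        · omega
        · exact absurd h.1.2.2.2 (by omega)
      · rintro ((h | h | h | h) | h)
        · omega
        · omega
        · omega
        · omega
        · exact absurd h.1.1 (by omega)
    · intro i j
      rw [← hSba i j]
      constructor
      · exact fun h => h.1
      · intro h
        refine ⟨h, fun h' => ?_⟩
        have := hfromA i _ h'; omega
    · intro i j h
      have := hfromA i _ h; omega
    · -- infinitude
      apply Set.infinite_of_injective_forall_mem
        (f := fun n : ℕ => Nat.pair 0 n)
      · intro a b h
        simpa using congrArg (fun t => t.unpair.2) h
      · intro n
        simp only [Set.mem_setOf_eq, vB, Nat.unpair_pair]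
        split <;> rfl
  · -- the v conditions
    intro x hx0
    constructor
    · intro hxB
      obtain ⟨N, hN⟩ := hg x
      have hPN : ∃ n : ℕ, ∀ s, n ≤ s → g x s = true :=
        ⟨N, fun s hs => (hN s hs).2 hxB⟩
      set N₀ := Nat.find hPN with hN₀
      have hspec : ∀ s, N₀ ≤ s → g x s = true := Nat.find_spec hPN
      have hQ : Qp g x N₀ := by
        refine ⟨hspec, ?_⟩
        by_cases h0' : N₀ = 0
        · exact Or.inl h0'
        · have hmin : ¬ ∀ s, N₀ - 1 ≤ s → g x s = true :=
            Nat.find_min hPN (by omega)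
          push_neg at hmin
          obtain ⟨s, hs1, hs2⟩ := hmin
          have hse : s = N₀ - 1 := by
            by_contra hne
            exact hs2 (hspec s (by omega))
          right
          rw [← hse]
          simpa using hs2
      refine ⟨Nat.pair x N₀, ?_, ?_⟩
      · unfold vB
        beta_reduce
        rw [Nat.unpair_pair]
        exact if_pos hQ
      · intro i' hi'
        unfold vB at hi'
        split at hi' <;> rename_i hq
        · have hq' : Qp g x i'.unpair.2 := by rwa [hi'] at hq
          have := Qp_unique hq' hQ
          rw [← Nat.pair_unpair i', hi', this]
        · omega
    · intro hxB i hvi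
      unfold vB at hvi
      split at hvi <;> rename_i hq
      · obtain ⟨N, hN⟩ := hg x
        have hq' : Qp g x i.unpair.2 := by rwa [hvi] at hq
        have h1 : g x (max i.unpair.2 N) = true := hq'.1 _ (le_max_left _ _)
        exact hxB ((hN _ (le_max_right _ _)).1 h1)
      · omega
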